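/- arXiv:2202.01399 — 2 statements merged into one kernel-verified Lean document; each statement's English description precedes it below -/
import Mathlib

section
/- Let λ > 0 and g₁, g₂ ∈ ℝ. For h > 0 let Ψ_h(R) = A_h·e^(√λ·R) + B_h·e^(−√λ·R) with A_h = (g₂ − g₁·e^(−√λ·h))/(2·sinh(√λ·h)) and B_h = (−g₂ + g₁·e^(√λ·h))/(2·sinh(√λ·h)). Then there exists C > 0 (depending only on λ, g₁, g₂) such that for all h with 0 < h ≤ 1, one has |Ψ_h'(0) − (g₂ − g₁)/h| ≤ C·h. -/
open Real

private lemma mono_help {y : ℝ} (f : ℝ → ℝ) (f' : ℝ → ℝ)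
    (hd : ∀ x, HasDerivAt f (f' x) x)
    (h0 : ∀ x ∈ Set.Ioo (0:ℝ) y, 0 ≤ f' x) {x : ℝ} (hx : 0 ≤ x) (hxy : x ≤ y) :
    f 0 ≤ f x := by
  have hdiff : Differentiable ℝ f := fun z => (hd z).differentiableAt
  have := monotoneOn_of_deriv_nonneg (convex_Icc 0 y) hdiff.continuous.continuousOn
    hdiff.differentiableOn (fun z hz => by
      rw [interior_Icc] at hz
      rw [(hd z).deriv]; exact h0 z hz)
  exact this (Set.mem_Icc.2 ⟨le_refl 0, hx.trans hxy⟩) (Set.mem_Icc.2 ⟨hx, hxy⟩) hx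

private lemma L1 {x : ℝ} (hx : 0 ≤ x) : Real.sinh x ≤ x * Real.cosh x := by
  have := mono_help (y := x) (fun t => t * Real.cosh t - Real.sinh t)
    (fun t => t * Real.sinh t)
    (fun t => by
      have h1 : HasDerivAt (fun t : ℝ => t * Real.cosh t) (1 * Real.cosh t + t * Real.sinh t) t :=
        (hasDerivAt_id t).mul (Real.hasDerivAt_cosh t)
      have : HasDerivAt (fun t => t * Real.cosh t - Real.sinh t) _ t := h1.sub (Real.hasDerivAt_sinh t)
      convert this using 1; ring)
    (fun t ht => mul_nonneg ht.1.le (Real.sinh_pos_iff.2 ht.1).le) hx le_rfl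
  simpa [sub_nonneg] using this

private lemma L2 {x y : ℝ} (hx : 0 ≤ x) (hxy : x ≤ y) :
    Real.cosh x - 1 ≤ Real.cosh y * x ^ 2 / 2 := by
  have := mono_help (y := y) (fun t => Real.cosh y * t ^ 2 / 2 - Real.cosh t + 1)
    (fun t => Real.cosh y * t - Real.sinh t)
    (fun t => by
      have h1 : HasDerivAt (fun t : ℝ => Real.cosh y * t ^ 2 / 2)
          (Real.cosh y * (2 * t) / 2) t := by
        have := ((hasDerivAt_pow 2 t).const_mul (Real.cosh y)).div_const 2
        simpa using this
      have : HasDerivAt (fun t => Real.cosh y * t ^ 2 / 2 - Real.cosh t + 1) _ t :=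
        (h1.sub (Real.hasDerivAt_cosh t)).add_const 1
      convert this using 1; ring)
    (fun t ht => by
      have h1 : Real.sinh t ≤ t * Real.cosh t := L1 ht.1.le
      have h2 : t * Real.cosh t ≤ t * Real.cosh y := by
        apply mul_le_mul_of_nonneg_left _ ht.1.le
        exact Real.cosh_le_cosh.2 (by
          rw [abs_of_nonneg ht.1.le, abs_of_nonneg (ht.1.le.trans ht.2.le)]
          exact ht.2.le)
      show 0 ≤ Real.cosh y * t - Real.sinh t
      nlinarith) hx hxy
  simp only [Real.cosh_zero] at this
  nlinarith

private lemma L3 {x y : ℝ} (hx : 0 ≤ x) (hxy : x ≤ y) :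
    Real.sinh x - x ≤ Real.cosh y * x ^ 3 / 6 := by
  have := mono_help (y := y) (fun t => Real.cosh y * t ^ 3 / 6 - Real.sinh t + t)
    (fun t => Real.cosh y * t ^ 2 / 2 - Real.cosh t + 1)
    (fun t => by
      have h1 : HasDerivAt (fun t : ℝ => Real.cosh y * t ^ 3 / 6)
          (Real.cosh y * (3 * t ^ 2) / 6) t := by
        have := ((hasDerivAt_pow 3 t).const_mul (Real.cosh y)).div_const 6
        simpa using this
      have : HasDerivAt (fun t => Real.cosh y * t ^ 3 / 6 - Real.sinh t + t) _ t :=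
        (h1.sub (Real.hasDerivAt_sinh t)).add (hasDerivAt_id t)
      convert this using 1; ring)
    (fun t ht => by
      have := L2 ht.1.le (ht.2.le)
      linarith) hx hxy
  simp only [Real.sinh_zero] at this
  nlinarith

private lemma L4 {x y : ℝ} (hx : 0 ≤ x) (hxy : x ≤ y) :
    x * Real.cosh x - Real.sinh x ≤ Real.cosh y * x ^ 3 / 3 := by
  have := mono_help (y := y) (fun t => Real.cosh y * t ^ 3 / 3 - t * Real.cosh t + Real.sinh t)
    (fun t => Real.cosh y * t ^ 2 - t * Real.sinh t)
    (fun t => by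
      have h1 : HasDerivAt (fun t : ℝ => Real.cosh y * t ^ 3 / 3)
          (Real.cosh y * (3 * t ^ 2) / 3) t := by
        have := ((hasDerivAt_pow 3 t).const_mul (Real.cosh y)).div_const 3
        simpa using this
      have h2 : HasDerivAt (fun t : ℝ => t * Real.cosh t)
          (1 * Real.cosh t + t * Real.sinh t) t :=
        (hasDerivAt_id t).mul (Real.hasDerivAt_cosh t)
      have : HasDerivAt (fun t => Real.cosh y * t ^ 3 / 3 - t * Real.cosh t + Real.sinh t) _ t :=
        (h1.sub h2).add (Real.hasDerivAt_sinh t)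
      convert this using 1; ring)
    (fun t ht => by
      have h1 : Real.sinh t ≤ t * Real.cosh t := L1 ht.1.le
      have h2 : Real.cosh t ≤ Real.cosh y := Real.cosh_le_cosh.2 (by
        rw [abs_of_nonneg ht.1.le, abs_of_nonneg (ht.1.le.trans ht.2.le)]; exact ht.2.le)
      show 0 ≤ Real.cosh y * t ^ 2 - t * Real.sinh t
      nlinarith [mul_le_mul_of_nonneg_left h1 ht.1.le, mul_le_mul_of_nonneg_left h2 (mul_nonneg ht.1.le ht.1.le)]) hx hxy
  simp only [Real.sinh_zero, Real.cosh_zero] at this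
  nlinarith

/-- mode-wise form of (3.7)-(3.8): Ψ_h'(0) ≈ (g₂ - g₁)/h up to O(h). -/
theorem stmt_5 (lam g1 g2 : ℝ) (hlam : 0 < lam)
    (Psi : ℝ → ℝ → ℝ)
    (hPsi : ∀ h R : ℝ, Psi h R =
      (g2 - g1 * Real.exp (-(Real.sqrt lam * h))) / (2 * Real.sinh (Real.sqrt lam * h)) *
        Real.exp (Real.sqrt lam * R)
      + (-g2 + g1 * Real.exp (Real.sqrt lam * h)) / (2 * Real.sinh (Real.sqrt lam * h)) *
        Real.exp (-(Real.sqrt lam * R))) :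
    ∃ C > 0, ∀ h : ℝ, 0 < h → h ≤ 1 →
      |deriv (Psi h) 0 - (g2 - g1) / h| ≤ C * h := by
  set s := Real.sqrt lam with hs
  have hspos : 0 < s := Real.sqrt_pos.2 hlam
  refine ⟨s ^ 2 * Real.cosh s * (|g1| + |g2|) + 1, by positivity, ?_⟩
  intro h hh hh1
  set x := s * h with hx
  have hxpos : 0 < x := mul_pos hspos hh
  have hxs : x ≤ s := by
    calc x = s * h := rfl
    _ ≤ s * 1 := mul_le_mul_of_nonneg_left hh1 hspos.le
    _ = s := mul_one s
  have hsinhpos : 0 < Real.sinh x := Real.sinh_pos_iff.2 hxpos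
  set A := (g2 - g1 * Real.exp (-x)) / (2 * Real.sinh x) with hA
  set B := (-g2 + g1 * Real.exp x) / (2 * Real.sinh x) with hB
  -- compute the derivative
  have hfun : Psi h = fun R => A * Real.exp (s * R) + B * Real.exp (-(s * R)) := by
    funext R; rw [hPsi h R]
  have hder : HasDerivAt (Psi h) (A * s - B * s) 0 := by
    rw [hfun]
    have h1 : HasDerivAt (fun R : ℝ => s * R) s 0 := by
      simpa using (hasDerivAt_id (0:ℝ)).const_mul s
    have he1 : HasDerivAt (fun R : ℝ => Real.exp (s * R)) (Real.exp (s * 0) * s) 0 :=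
      (Real.hasDerivAt_exp (s * 0)).comp 0 h1
    have he2 : HasDerivAt (fun R : ℝ => Real.exp (-(s * R))) (Real.exp (-(s * 0)) * (-s)) 0 :=
      by have h1n : HasDerivAt (fun R : ℝ => -(s * R)) (-s) 0 := h1.neg
         exact (Real.hasDerivAt_exp (-(s * 0))).comp 0 h1n
    have : HasDerivAt (fun R => A * Real.exp (s * R) + B * Real.exp (-(s * R))) _ 0 :=
      (he1.const_mul A).add (he2.const_mul B)
    convert this using 1
    simp [mul_comm]
    ring
  rw [hder.deriv]
  -- rewrite the derivative in terms of cosh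
  have hderiv_eq : A * s - B * s = s * (g2 - g1 * Real.cosh x) / Real.sinh x := by
    rw [hA, hB, Real.cosh_eq]
    field_simp
    ring
  rw [hderiv_eq]
  -- key estimate
  have hcosh : (0:ℝ) < Real.cosh s := Real.cosh_pos s
  have hN : |x * (g2 - g1 * Real.cosh x) - (g2 - g1) * Real.sinh x| ≤
      Real.cosh s * x ^ 3 * (|g1| + |g2|) := by
    have e1 : x * (g2 - g1 * Real.cosh x) - (g2 - g1) * Real.sinh x =
        g2 * (x - Real.sinh x) - g1 * (x * Real.cosh x - Real.sinh x) := by ring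
    rw [e1]
    have b1 : |x - Real.sinh x| ≤ Real.cosh s * x ^ 3 / 6 := by
      rw [abs_sub_comm, abs_of_nonneg (by linarith [Real.self_le_sinh_iff.2 hxpos.le])]
      exact L3 hxpos.le hxs
    have b2 : |x * Real.cosh x - Real.sinh x| ≤ Real.cosh s * x ^ 3 / 3 := by
      rw [abs_of_nonneg (by linarith [L1 hxpos.le])]
      exact L4 hxpos.le hxs
    calc |g2 * (x - Real.sinh x) - g1 * (x * Real.cosh x - Real.sinh x)|
        ≤ |g2| * |x - Real.sinh x| + |g1| * |x * Real.cosh x - Real.sinh x| := by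
          rw [← abs_mul, ← abs_mul]; exact abs_sub _ _
      _ ≤ Real.cosh s * x ^ 3 * (|g1| + |g2|) := by
          nlinarith [mul_le_mul_of_nonneg_left b1 (abs_nonneg g2),
            mul_le_mul_of_nonneg_left b2 (abs_nonneg g1),
            mul_nonneg (mul_nonneg hcosh.le (pow_pos hxpos 3).le) (abs_nonneg g1),
            mul_nonneg (mul_nonneg hcosh.le (pow_pos hxpos 3).le) (abs_nonneg g2)]
  have hden : x ^ 2 ≤ x * Real.sinh x :=
    by nlinarith [Real.self_le_sinh_iff.2 hxpos.le]
  have key : s * (g2 - g1 * Real.cosh x) / Real.sinh x - (g2 - g1) / h =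
      s * (x * (g2 - g1 * Real.cosh x) - (g2 - g1) * Real.sinh x) / (x * Real.sinh x) := by
    rw [hx]
    field_simp
  rw [key, abs_div, abs_mul, abs_of_nonneg hspos.le,
    abs_of_pos (mul_pos hxpos hsinhpos)]
  rw [div_le_iff₀ (mul_pos hxpos hsinhpos)]
  calc s * |x * (g2 - g1 * Real.cosh x) - (g2 - g1) * Real.sinh x|
      ≤ s * (Real.cosh s * x ^ 3 * (|g1| + |g2|)) := by gcongr
    _ = (s ^ 2 * Real.cosh s * (|g1| + |g2|)) * h * x ^ 2 := by rw [hx]; ring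
    _ ≤ ((s ^ 2 * Real.cosh s * (|g1| + |g2|)) + 1) * h * x ^ 2 := by nlinarith [sq_nonneg x]
    _ ≤ ((s ^ 2 * Real.cosh s * (|g1| + |g2|)) + 1) * h * (x * Real.sinh x) := by
        have hc : (0:ℝ) ≤ ((s ^ 2 * Real.cosh s * (|g1| + |g2|)) + 1) * h := by positivity
        exact mul_le_mul_of_nonneg_left hden hc
end

section
/- Let λ > 0 and g₁, g₂ ∈ ℝ. For h > 0 let Ψ_h(R) = A_h·e^(√λ·R) + B_h·e^(−√λ·R) with A_h = (g₂ − g₁·e^(−√λ·h))/(2·sinh(√λ·h)) and B_h = (−g₂ + g₁·e^(√λ·h))/(2·sinh(√λ·h)). Then there exists C > 0 (depending only on λ, g₁, g₂) such that for all h with 0 < h ≤ 1, one has |Ψ_h'(h) − Ψ_h'(0) − (λ·h/2)·(g₁ + g₂)| ≤ C·h². -/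
open Real

/-- Monotonicity from derivative on `[0, s]`. -/
lemma aux_mono_Icc (s : ℝ) (f f' : ℝ → ℝ) (hd : ∀ x, HasDerivAt f (f' x) x)
    (h0 : ∀ x, 0 < x → x < s → 0 ≤ f' x) :
    ∀ x, 0 ≤ x → x ≤ s → f 0 ≤ f x := by
  intro x hx hxs
  have hmono : MonotoneOn f (Set.Icc 0 s) := by
    apply monotoneOn_of_deriv_nonneg (convex_Icc 0 s)
    · exact fun y _ => (hd y).continuousAt.continuousWithinAt
    · exact fun y _ => (hd y).differentiableAt.differentiableWithinAt
    · intro y hy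
      rw [interior_Icc] at hy
      rw [(hd y).deriv]
      exact h0 y hy.1 hy.2
  exact hmono ⟨le_refl 0, le_trans hx hxs⟩ ⟨hx, hxs⟩ hx

lemma aux_L1 (s : ℝ) : ∀ u, 0 ≤ u → u ≤ s → Real.sinh u ≤ u * Real.cosh u := by
  have key := aux_mono_Icc s (fun u => u * Real.cosh u - Real.sinh u)
    (fun u => u * Real.sinh u)
    (fun x => by
      have h1 : HasDerivAt (fun u : ℝ => u * Real.cosh u - Real.sinh u)
          (1 * Real.cosh x + x * Real.sinh x - Real.cosh x) x :=
        ((hasDerivAt_id x).mul (Real.hasDerivAt_cosh x)).sub (Real.hasDerivAt_sinh x)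
      convert h1 using 1; ring)
    (fun x hx _ => by
      show 0 ≤ x * Real.sinh x
      have : 0 ≤ Real.sinh x := (Real.sinh_pos_iff.mpr hx).le
      positivity)
  intro u hu hus
  have := key u hu hus
  simp at this
  linarith

lemma aux_L2 (s : ℝ) : ∀ u, 0 ≤ u → u ≤ s →
    u * Real.cosh u - Real.sinh u ≤ Real.cosh s * u ^ 3 / 3 := by
  have key := aux_mono_Icc s
    (fun u => Real.cosh s * u ^ 3 / 3 - (u * Real.cosh u - Real.sinh u))
    (fun u => Real.cosh s * u ^ 2 - u * Real.sinh u)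
    (fun x => by
      have h1 : HasDerivAt (fun u : ℝ => Real.cosh s * u ^ 3 / 3 - (u * Real.cosh u - Real.sinh u))
          (Real.cosh s * (3 * x ^ 2) / 3 -
            (1 * Real.cosh x + x * Real.sinh x - Real.cosh x)) x := by
        exact (((hasDerivAt_pow 3 x).const_mul (Real.cosh s)).div_const 3).sub
          (((hasDerivAt_id x).mul (Real.hasDerivAt_cosh x)).sub (Real.hasDerivAt_sinh x))
      convert h1 using 1; ring)
    (fun x hx hxs => by
      show 0 ≤ Real.cosh s * x ^ 2 - x * Real.sinh x
      have hL1 : Real.sinh x ≤ x * Real.cosh x := aux_L1 s x hx.le hxs.le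
      have hc : Real.cosh x ≤ Real.cosh s := by
        rw [Real.cosh_le_cosh, abs_of_nonneg hx.le, abs_of_nonneg (hx.le.trans hxs.le)]
        exact hxs.le
      nlinarith [hx.le, Real.cosh_pos x])
  intro u hu hus
  have := key u hu hus
  simp at this
  linarith

lemma aux_LB (s : ℝ) : ∀ u, 0 ≤ u → u ≤ s →
    0 ≤ u * Real.sinh u - 2 * Real.cosh u + 2 := by
  have key := aux_mono_Icc s
    (fun u => u * Real.sinh u - 2 * Real.cosh u + 2)
    (fun u => u * Real.cosh u - Real.sinh u)
    (fun x => by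
      have h1 : HasDerivAt (fun u : ℝ => u * Real.sinh u - 2 * Real.cosh u + 2)
          (1 * Real.sinh x + x * Real.cosh x - 2 * Real.sinh x) x := by
        exact (((hasDerivAt_id x).mul (Real.hasDerivAt_sinh x)).sub
          ((Real.hasDerivAt_cosh x).const_mul 2)).add_const 2
      convert h1 using 1; ring)
    (fun x hx hxs => by
      show 0 ≤ x * Real.cosh x - Real.sinh x
      have := aux_L1 s x hx.le hxs.le; linarith)
  intro u hu hus
  have := key u hu hus
  simp [Real.cosh_zero] at this
  linarith

lemma aux_L3 (s : ℝ) : ∀ u, 0 ≤ u → u ≤ s →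
    u * Real.sinh u - 2 * Real.cosh u + 2 ≤ Real.cosh s * u ^ 4 / 12 := by
  have key := aux_mono_Icc s
    (fun u => Real.cosh s * u ^ 4 / 12 - (u * Real.sinh u - 2 * Real.cosh u + 2))
    (fun u => Real.cosh s * u ^ 3 / 3 - (u * Real.cosh u - Real.sinh u))
    (fun x => by
      have h1 : HasDerivAt
          (fun u : ℝ => Real.cosh s * u ^ 4 / 12 - (u * Real.sinh u - 2 * Real.cosh u + 2))
          (Real.cosh s * (4 * x ^ 3) / 12 -
            (1 * Real.sinh x + x * Real.cosh x - 2 * Real.sinh x)) x := by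
        exact (((hasDerivAt_pow 4 x).const_mul (Real.cosh s)).div_const 12).sub
          ((((hasDerivAt_id x).mul (Real.hasDerivAt_sinh x)).sub
            ((Real.hasDerivAt_cosh x).const_mul 2)).add_const 2)
      convert h1 using 1; ring)
    (fun x hx hxs => by
      show 0 ≤ Real.cosh s * x ^ 3 / 3 - (x * Real.cosh x - Real.sinh x)
      have := aux_L2 s x hx.le hxs.le; linarith)
  intro u hu hus
  have := key u hu hus
  simp [Real.cosh_zero] at this
  linarith

/-- mode-wise form of (3.10)-(3.11):
Ψ_h'(h) - Ψ_h'(0) = (λh/2)(g₁+g₂) + O(h²). -/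
theorem stmt_8 (lam g1 g2 : ℝ) (hlam : 0 < lam)
    (Psi : ℝ → ℝ → ℝ)
    (hPsi : ∀ h R : ℝ, Psi h R =
      (g2 - g1 * Real.exp (-(Real.sqrt lam * h))) / (2 * Real.sinh (Real.sqrt lam * h)) *
        Real.exp (Real.sqrt lam * R)
      + (-g2 + g1 * Real.exp (Real.sqrt lam * h)) / (2 * Real.sinh (Real.sqrt lam * h)) *
        Real.exp (-(Real.sqrt lam * R))) :
    ∃ C > 0, ∀ h : ℝ, 0 < h → h ≤ 1 →
      |deriv (Psi h) h - deriv (Psi h) 0 - lam * h / 2 * (g1 + g2)| ≤ C * h ^ 2 := by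
  set s := Real.sqrt lam with hs_def
  have hs : 0 < s := Real.sqrt_pos.mpr hlam
  have hss : s * s = lam := Real.mul_self_sqrt hlam.le
  refine ⟨s ^ 4 * Real.cosh s * |g1 + g2| / 24 + 1, by positivity, ?_⟩
  intro h hh hh1
  have hu : 0 < s * h := mul_pos hs hh
  have hus : s * h ≤ s := by nlinarith
  have hsinh : 0 < Real.sinh (s * h) := Real.sinh_pos_iff.mpr hu
  have hPsifun : Psi h = fun R =>
      (g2 - g1 * Real.exp (-(s * h))) / (2 * Real.sinh (s * h)) * Real.exp (s * R)
      + (-g2 + g1 * Real.exp (s * h)) / (2 * Real.sinh (s * h)) * Real.exp (-(s * R)) :=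
    funext (hPsi h)
  have hderiv : ∀ R : ℝ, deriv (Psi h) R =
      (g2 - g1 * Real.exp (-(s * h))) / (2 * Real.sinh (s * h)) * (Real.exp (s * R) * s)
      + (-g2 + g1 * Real.exp (s * h)) / (2 * Real.sinh (s * h))
          * (Real.exp (-(s * R)) * (-s)) := by
    intro R
    rw [hPsifun]
    have h1 : HasDerivAt (fun R =>
        (g2 - g1 * Real.exp (-(s * h))) / (2 * Real.sinh (s * h)) * Real.exp (s * R)
        + (-g2 + g1 * Real.exp (s * h)) / (2 * Real.sinh (s * h)) * Real.exp (-(s * R)))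
        ((g2 - g1 * Real.exp (-(s * h))) / (2 * Real.sinh (s * h))
            * (Real.exp (s * R) * (s * 1))
          + (-g2 + g1 * Real.exp (s * h)) / (2 * Real.sinh (s * h))
            * (Real.exp (-(s * R)) * (-(s * 1)))) R := by
      exact ((((hasDerivAt_id R).const_mul s).exp).const_mul _).add
        (((((hasDerivAt_id R).const_mul s).neg).exp).const_mul _)
    rw [h1.deriv]; ring
  have hrel : Real.cosh (s * h) ^ 2 - Real.sinh (s * h) ^ 2 = 1 :=
    Real.cosh_sq_sub_sinh_sq (s * h)
  have key : deriv (Psi h) h - deriv (Psi h) 0 - lam * h / 2 * (g1 + g2) =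
      s * (g1 + g2) * (2 * Real.cosh (s * h) - 2 - (s * h) * Real.sinh (s * h))
        / (2 * Real.sinh (s * h)) := by
    rw [hderiv h, hderiv 0, mul_zero, neg_zero, Real.exp_zero, ← hss]
    have hE : Real.exp (s * h) = Real.cosh (s * h) + Real.sinh (s * h) :=
      (Real.cosh_add_sinh _).symm
    have hF : Real.exp (-(s * h)) = Real.cosh (s * h) - Real.sinh (s * h) :=
      (Real.cosh_sub_sinh _).symm
    field_simp
    rw [hE, hF]
    linear_combination (-(2 * g1)) * hrel
  rw [key]
  have hN0 : 0 ≤ (s * h) * Real.sinh (s * h) - 2 * Real.cosh (s * h) + 2 :=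
    aux_LB s (s * h) hu.le hus
  have hN1 : (s * h) * Real.sinh (s * h) - 2 * Real.cosh (s * h) + 2
      ≤ Real.cosh s * (s * h) ^ 4 / 12 := aux_L3 s (s * h) hu.le hus
  have habs : |s * (g1 + g2) * (2 * Real.cosh (s * h) - 2 - (s * h) * Real.sinh (s * h))
        / (2 * Real.sinh (s * h))|
      = s * |g1 + g2| * ((s * h) * Real.sinh (s * h) - 2 * Real.cosh (s * h) + 2)
        / (2 * Real.sinh (s * h)) := by
    rw [abs_div, abs_mul, abs_mul, abs_of_nonneg hs.le,
      abs_of_nonpos (by linarith :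
        2 * Real.cosh (s * h) - 2 - (s * h) * Real.sinh (s * h) ≤ 0),
      abs_of_nonneg (by linarith : (0:ℝ) ≤ 2 * Real.sinh (s * h))]
    ring_nf
  rw [habs]
  have hsinh_ge : s * h ≤ Real.sinh (s * h) := (Real.self_lt_sinh_iff.mpr hu).le
  have hstep : s * |g1 + g2| * ((s * h) * Real.sinh (s * h) - 2 * Real.cosh (s * h) + 2)
        / (2 * Real.sinh (s * h))
      ≤ s * |g1 + g2| * (Real.cosh s * (s * h) ^ 4 / 12) / (2 * (s * h)) := by
    apply div_le_div₀ (by positivity)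
    · have h0 : (0:ℝ) ≤ s * |g1 + g2| := by positivity
      nlinarith
    · positivity
    · linarith
  refine le_trans hstep ?_
  have hcosh : (0:ℝ) < Real.cosh s := Real.cosh_pos s
  have heq : s * |g1 + g2| * (Real.cosh s * (s * h) ^ 4 / 12) / (2 * (s * h))
      = s ^ 4 * Real.cosh s * |g1 + g2| / 24 * h ^ 3 := by
    field_simp
    ring
  rw [heq]
  have hh3 : h ^ 3 ≤ h ^ 2 := by nlinarith
  have hC : (0:ℝ) ≤ s ^ 4 * Real.cosh s * |g1 + g2| / 24 := by positivity
  nlinarith [sq_nonneg h]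
end
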